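/- Abstract big-step implementation theorem (runs to evaluations): in a lax implementation system, for every run Q₀ ⇒* Q from an initial state Q₀ with ⟦Q₀⟧ = t, there exists a →str-evaluation t →str* ⟦Q⟧ whose length equals the number of principal transitions in the run. -/
import Mathlib

/-- Dal Lago–Martini diamond property. -/
def Diamond {A : Type*} (r : A → A → Prop) : Prop :=
  ∀ t s₁ s₂, r t s₁ → r t s₂ → s₁ ≠ s₂ → ∃ u, r s₁ u ∧ r s₂ u

/-- `ReducesIn r k t s`: a reduction sequence of length exactly `k` from `t` to `s`. -/
inductive ReducesIn {A : Type*} (r : A → A → Prop) : ℕ → A → A → Prop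
  | refl (t : A) : ReducesIn r 0 t t
  | step {t u s : A} {n : ℕ} : r t u → ReducesIn r n u s → ReducesIn r (n + 1) t s

/-- `RunN p se n Q Q'`: a machine run from `Q` to `Q'` (transitions `⇒ = p ∪ se`)
containing exactly `n` principal (`p`) transitions. -/
inductive RunN {S : Type*} (p se : S → S → Prop) : ℕ → S → S → Prop
  | refl (Q : S) : RunN p se 0 Q Q
  | prin {Q Q' Q'' : S} {n : ℕ} : p Q Q' → RunN p se n Q' Q'' → RunN p se (n + 1) Q Q''
  | sea {Q Q' Q'' : S} {n : ℕ} : se Q Q' → RunN p se n Q' Q'' → RunN p se n Q Q''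

/-- Runs to evaluations: in a lax implementation system, every run of `n`
principal transitions from an initial state decoding to `t` projects to a
strategy evaluation of length `n` from `t` to the decoding of the end state. -/
theorem runs_to_evaluations {S T : Type*}
    (p se : S → S → Prop) (rstr : T → T → Prop) (decode : S → T)
    (projection : ∀ Q Q', p Q Q' → rstr (decode Q) (decode Q'))
    (transparency : ∀ Q Q', se Q Q' → decode Q = decode Q')
    (seaTerminates : WellFounded (fun Q' Q => se Q Q'))
    (halt : ∀ Q : S, (∀ Q', ¬ p Q Q') → (∀ Q', ¬ se Q Q') →
      ∀ s, ¬ rstr (decode Q) s)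
    (diamond : Diamond rstr) :
    ∀ (Q₀ Q : S) (t : T) (n : ℕ), decode Q₀ = t → RunN p se n Q₀ Q →
      ReducesIn rstr n t (decode Q) := by
  intro Q₀ Q t n ht run
  subst ht
  induction run with
  | refl Q => exact ReducesIn.refl _
  | prin h _ ih => exact ReducesIn.step (projection _ _ h) ih
  | sea h _ ih => rw [transparency _ _ h]; exact ih
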